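/- Let the vectors a^{(m)} be defined by a^{(1)} = (1) and a^{(m+1)} = A_{m+1}·(a^{(m)},0)ᵀ. Then for every m ≥ 2 and every i with 1 ≤ i ≤ m−1, one has ∑_{j=1}^{m} C_{m+i−j}·a_j^{(m)} = 0. -/

import Mathlib

/-- The m×m lower-triangular matrix A_m with entries 1 on the diagonal, −2·C₀ on the
subdiagonal, and −C_{i−j−1} for i > j+1 (indices in the paper are 1-based). -/
def Amat (k : ℕ) : Matrix (Fin k) (Fin k) ℤ := fun i j =>
  if (i : ℕ) = (j : ℕ) then 1
  else if (i : ℕ) = (j : ℕ) + 1 then -(2 * catalan 0)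
  else if (j : ℕ) + 1 < (i : ℕ) then -(catalan ((i : ℕ) - (j : ℕ) - 1) : ℤ)
  else 0

/-- The vectors a⁽ᵐ⁾: here `aVec m : Fin (m+1) → ℤ` is a⁽ᵐ⁺¹⁾ of the paper, i.e.
a⁽¹⁾ = (1) and a⁽ᵐ⁺¹⁾ = A_{m+1}·(a⁽ᵐ⁾,0)ᵀ. -/
def aVec : (m : ℕ) → Fin (m + 1) → ℤ
  | 0 => fun _ => 1
  | m + 1 => (Amat (m + 2)).mulVec (Fin.snoc (aVec m) 0)

/-- For every m ≥ 2 (written `m+2`) and every i with 1 ≤ i ≤ m−1,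
∑_{j=1}^{m} C_{m+i−j}·a_j⁽ᵐ⁾ = 0.  (The `j`-th coordinate below is a_{j+1} of the paper.) -/

lemma cat_conv (R i' : ℕ) :
    catalan (R + i' + 2) = 2 * catalan (R + i' + 1)
      + ∑ t ∈ Finset.range R, catalan (t + 1) * catalan (R + i' - t)
      + ∑ e ∈ Finset.range i', catalan (i' - e) * catalan (R + 1 + e) := by
  have h := catalan_succ (R + i' + 1)
  rw [Fin.sum_univ_eq_sum_range (fun d => catalan d * catalan (R + i' + 1 - d))] at h
  rw [Finset.sum_range_succ' (fun d => catalan d * catalan (R + i' + 1 - d))] at h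
  rw [Finset.sum_range_succ (fun d => catalan (d+1) * catalan (R + i' + 1 - (d+1)))] at h
  have hsplit : ∑ d ∈ Finset.range (R + i'), catalan (d+1) * catalan (R + i' + 1 - (d+1))
      = ∑ d ∈ Finset.range R, catalan (d+1) * catalan (R + i' + 1 - (d+1))
        + ∑ e ∈ Finset.range i', catalan (R + e + 1) * catalan (R + i' + 1 - (R + e + 1)) := by
    rw [Finset.range_eq_Ico, ← Finset.sum_Ico_consecutive _ (Nat.zero_le R) (Nat.le_add_right R i')]
    rw [← Finset.range_eq_Ico, Finset.sum_Ico_eq_sum_range]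
    simp only [Nat.add_sub_cancel_left]
  rw [hsplit] at h
  rw [show R + i' + 2 = R + i' + 1 + 1 from rfl, h]
  have e1 : ∀ d ∈ Finset.range R, catalan (d+1) * catalan (R + i' + 1 - (d+1))
      = catalan (d+1) * catalan (R + i' - d) := by
    intro d hd; congr 2; omega
  have e2 : ∀ e ∈ Finset.range i', catalan (R + e + 1) * catalan (R + i' + 1 - (R + e + 1))
      = catalan (i' - e) * catalan (R + 1 + e) := by
    intro e he
    rw [show R + i' + 1 - (R + e + 1) = i' - e by omega, show R + e + 1 = R + 1 + e by ring,
      Nat.mul_comm]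
  rw [Finset.sum_congr rfl e1, Finset.sum_congr rfl e2]
  simp only [Nat.sub_self, catalan_zero, Nat.one_mul, Nat.mul_one, Nat.sub_zero]
  ring

lemma inner_coeff (M i : ℕ) (hi : 1 ≤ i) (k : Fin (M+1)) :
    ∑ j : Fin (M+2), (catalan (M+1+i-(j:ℕ)) : ℤ) * Amat (M+2) j k.castSucc
      = ∑ e ∈ Finset.range (i-1), (catalan (i-1-e) : ℤ) * catalan (M + 1 + e - (k:ℕ)) := by
  set K := (k : ℕ) with hKdef
  have hK : K ≤ M := Nat.lt_succ_iff.mp k.isLt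
  have hA : ∀ j : Fin (M+2), (catalan (M+1+i-(j:ℕ)) : ℤ) * Amat (M+2) j k.castSucc
      = (fun j : ℕ => (catalan (M+1+i-j) : ℤ) *
          (if j = K then 1 else if j = K+1 then -(2*(catalan 0:ℤ))
            else if K+1 < j then -(catalan (j - K - 1) : ℤ) else 0)) (j : ℕ) := by
    intro j
    simp only [Amat, Fin.coe_castSucc]
    rfl
  rw [show ∑ j : Fin (M+2), (catalan (M+1+i-(j:ℕ)) : ℤ) * Amat (M+2) j k.castSucc
      = ∑ j ∈ Finset.range (M+2), (catalan (M+1+i-j) : ℤ) *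
          (if j = K then 1 else if j = K+1 then -(2*(catalan 0:ℤ))
            else if K+1 < j then -(catalan (j - K - 1) : ℤ) else 0) by
    rw [← Fin.sum_univ_eq_sum_range (fun j : ℕ => (catalan (M+1+i-j) : ℤ) *
      (if j = K then 1 else if j = K+1 then -(2*(catalan 0:ℤ))
        else if K+1 < j then -(catalan (j - K - 1) : ℤ) else 0)) (M+2)]
    exact Finset.sum_congr rfl (fun j _ => hA j)]
  rw [Finset.range_eq_Ico, ← Finset.sum_Ico_consecutive _ (Nat.zero_le K) (by omega : K ≤ M+2)]
  have hzero : ∑ j ∈ Finset.Ico 0 K, (catalan (M+1+i-j) : ℤ) *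
      (if j = K then 1 else if j = K+1 then -(2*(catalan 0:ℤ))
        else if K+1 < j then -(catalan (j - K - 1) : ℤ) else 0) = 0 := by
    apply Finset.sum_eq_zero
    intro j hj
    simp only [Finset.mem_Ico] at hj
    rw [if_neg (by omega), if_neg (by omega), if_neg (by omega), mul_zero]
  rw [hzero, zero_add, Finset.sum_Ico_eq_sum_range]
  rw [show M + 2 - K = (M - K) + 2 by omega]
  set R := M - K with hR
  rw [Finset.sum_range_succ' (fun t => (catalan (M+1+i-(K+t)) : ℤ) *
      (if K+t = K then 1 else if K+t = K+1 then -(2*(catalan 0:ℤ))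
        else if K+1 < K+t then -(catalan (K+t - K - 1) : ℤ) else 0))]
  rw [Finset.sum_range_succ' (fun t => (catalan (M+1+i-(K+(t+1))) : ℤ) *
      (if K+(t+1) = K then 1 else if K+(t+1) = K+1 then -(2*(catalan 0:ℤ))
        else if K+1 < K+(t+1) then -(catalan (K+(t+1) - K - 1) : ℤ) else 0))]
  have hterm : ∀ t ∈ Finset.range R, (catalan (M+1+i-(K+(t+1+1))) : ℤ) *
      (if K+(t+1+1) = K then 1 else if K+(t+1+1) = K+1 then -(2*(catalan 0:ℤ))
        else if K+1 < K+(t+1+1) then -(catalan (K+(t+1+1) - K - 1) : ℤ) else 0)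
      = -((catalan (t+1) : ℤ) * catalan (R + (i-1) - t)) := by
    intro t ht
    rw [if_neg (by omega), if_neg (by omega), if_pos (by omega)]
    rw [show K+(t+1+1) - K - 1 = t + 1 by omega, show M+1+i-(K+(t+1+1)) = R + (i-1) - t by omega]
    ring
  rw [Finset.sum_congr rfl hterm]
  rw [if_neg (by omega), if_pos rfl, if_pos (Nat.add_zero K)]
  rw [show M+1+i-(K+(0+1)) = R + (i-1) + 1 by omega, show M+1+i-(K+0) = R + (i-1) + 2 by omega]
  have hz : (catalan (R + (i-1) + 2) : ℤ) = 2 * catalan (R + (i-1) + 1)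
      + ∑ t ∈ Finset.range R, (catalan (t + 1) : ℤ) * catalan (R + (i-1) - t)
      + ∑ e ∈ Finset.range (i-1), (catalan ((i-1) - e) : ℤ) * catalan (R + 1 + e) := by
    exact_mod_cast congrArg (Nat.cast : ℕ → ℤ) (cat_conv R (i-1))
  have hre : ∀ e ∈ Finset.range (i-1), (catalan ((i-1) - e) : ℤ) * catalan (M + 1 + e - K)
      = (catalan ((i-1) - e) : ℤ) * catalan (R + 1 + e) := by
    intro e he
    rw [show M + 1 + e - K = R + 1 + e by omega]
  rw [Finset.sum_congr rfl hre]
  rw [Finset.sum_neg_distrib]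
  push_cast at hz ⊢
  simp only [catalan_zero, Nat.cast_one, mul_one]
  linarith [hz]


lemma key_sum : ∀ (M i : ℕ), 1 ≤ i → i ≤ M →
    ∑ j : Fin (M+1), (catalan (M + i - (j:ℕ)) : ℤ) * aVec M j = 0 := by
  intro M
  induction M with
  | zero => intro i h1 h2; omega
  | succ M IH =>
    intro i hi1 hi2
    have hAv : ∀ j : Fin (M+2), aVec (M+1) j
        = ∑ kk : Fin (M+2), Amat (M+2) j kk * (Fin.snoc (aVec M) 0 : Fin (M+2) → ℤ) kk := by
      intro j
      simp [aVec, Matrix.mulVec, dotProduct]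
    calc ∑ j : Fin (M+2), (catalan (M + 1 + i - (j:ℕ)) : ℤ) * aVec (M+1) j
        = ∑ j : Fin (M+2), ∑ kk : Fin (M+2), (catalan (M + 1 + i - (j:ℕ)) : ℤ) *
            (Amat (M+2) j kk * (Fin.snoc (aVec M) 0 : Fin (M+2) → ℤ) kk) := by
          refine Finset.sum_congr rfl fun j _ => ?_
          rw [hAv j, Finset.mul_sum]
      _ = ∑ kk : Fin (M+2), ∑ j : Fin (M+2), (catalan (M + 1 + i - (j:ℕ)) : ℤ) *
            (Amat (M+2) j kk * (Fin.snoc (aVec M) 0 : Fin (M+2) → ℤ) kk) := Finset.sum_comm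
      _ = ∑ kk : Fin (M+1), (∑ j : Fin (M+2), (catalan (M + 1 + i - (j:ℕ)) : ℤ) *
            Amat (M+2) j kk.castSucc) * aVec M kk := by
          rw [Fin.sum_univ_castSucc (fun kk : Fin (M+2) => ∑ j : Fin (M+2),
            (catalan (M + 1 + i - (j:ℕ)) : ℤ) *
            (Amat (M+2) j kk * (Fin.snoc (aVec M) 0 : Fin (M+2) → ℤ) kk))]
          simp only [Fin.snoc_last, mul_zero, Finset.sum_const_zero, add_zero, Fin.snoc_castSucc]
          refine Finset.sum_congr rfl fun kk _ => ?_
          rw [Finset.sum_mul]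
          exact Finset.sum_congr rfl fun j _ => by ring
      _ = ∑ kk : Fin (M+1), (∑ e ∈ Finset.range (i-1),
            (catalan (i-1-e) : ℤ) * catalan (M + 1 + e - (kk:ℕ))) * aVec M kk := by
          refine Finset.sum_congr rfl fun kk _ => ?_
          rw [inner_coeff M i hi1 kk]
      _ = ∑ e ∈ Finset.range (i-1), (catalan (i-1-e) : ℤ) *
            ∑ kk : Fin (M+1), (catalan (M + (e+1) - (kk:ℕ)) : ℤ) * aVec M kk := by
          rw [Finset.sum_congr rfl fun (kk : Fin (M+1)) _ =>
            (Finset.sum_mul (Finset.range (i-1))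
              (fun e => (catalan (i-1-e) : ℤ) * catalan (M + 1 + e - (kk:ℕ))) (aVec M kk)),
            Finset.sum_comm]
          refine Finset.sum_congr rfl fun e _ => ?_
          rw [Finset.mul_sum]
          refine Finset.sum_congr rfl fun kk _ => ?_
          rw [show M + (e+1) = M + 1 + e by ring]
          ring
      _ = 0 := by
          refine Finset.sum_eq_zero fun e he => ?_
          rw [IH (e+1) (by omega) (by simp only [Finset.mem_range] at he; omega), mul_zero]

/-- For every m ≥ 2 (written `m+2`) and every i with 1 ≤ i ≤ m−1,
∑_{j=1}^{m} C_{m+i−j}·a_j⁽ᵐ⁾ = 0.  (The `j`-th coordinate below is a_{j+1} of the paper.) -/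
theorem stmt_7 (m i : ℕ) (hi1 : 1 ≤ i) (hi2 : i ≤ (m + 2) - 1) :
    ∑ j : Fin (m + 2), (catalan ((m + 2) + i - ((j : ℕ) + 1)) : ℤ) * aVec (m + 1) j = 0 := by
  have h : ∀ j : Fin (m+2), (catalan ((m + 2) + i - ((j : ℕ) + 1)) : ℤ) * aVec (m + 1) j
      = (catalan ((m + 1) + i - (j : ℕ)) : ℤ) * aVec (m + 1) j := by
    intro j
    rw [show (m + 2) + i - ((j : ℕ) + 1) = (m + 1) + i - (j : ℕ) by omega]
  rw [Finset.sum_congr rfl fun j _ => h j]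
  exact key_sum (m+1) i hi1 (by omega)
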